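/- Let G be a star-like graph with 1 branch (so V = K ∪ L₁ with branch parametrization φ₁), let a be a symmetric edge-weight function with a(u,v) > 0 for all adjacent u, v, and let b : V → ℝ. Define J pointwise on functions f : V → ℂ by (Jf)(v) = Σ_{w ∼ v} a(v,w) f(w) + b(v) f(v), and fix v₀ ∈ K. If ψ : V → ℂ satisfies ψ(v) = 0 for every v ∈ K and (Jᵏψ)(v₀) = 0 for every integer k ≥ 0, then ψ is identically zero. Equivalently, any function ψ with (Jᵏψ)(v₀) = 0 for all k ≥ 0 is uniquely determined on the branch L₁ by its values on K. -/

import Mathlib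

/-- A star-like graph with `m` branches (see the paper): compact component `K`, injective
branch parametrizations `φ i`, branches pairwise disjoint, `L_i ∩ K = {φ i 0}`, for `j ≥ 1`
the neighbors of `φ i j` are exactly `φ i (j-1)` and `φ i (j+1)`, and the neighbors of
`φ i 0` lie in `K ∪ {φ i 1}`. -/
structure StarLike {V : Type*} (G : SimpleGraph V) (m : ℕ) where
  K : Finset V
  φ : Fin m → ℕ → V
  connected : G.Connected
  locFin : ∀ v : V, (G.neighborSet v).Finite
  φ_inj : ∀ i, Function.Injective (φ i)
  cover : ∀ v : V, v ∈ K ∨ ∃ i n, v = φ i n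
  branch_disjoint : ∀ i j, i ≠ j → ∀ p q, φ i p ≠ φ j q
  branch_inter_K : ∀ i n, φ i n ∈ K ↔ n = 0
  adj_branch : ∀ i (j : ℕ), 1 ≤ j → ∀ w, G.Adj (φ i j) w ↔ w = φ i (j - 1) ∨ w = φ i (j + 1)
  adj_base : ∀ i w, G.Adj (φ i 0) w → w ∈ K ∨ w = φ i 1

/-- The Jacobi-type operator `J` acting pointwise on all functions `f : V → ℂ`:
`(Jf)(v) = Σ_{w ∼ v} a(v,w) f(w) + b(v) f(v)`. -/
noncomputable def Jpt {V : Type*} (G : SimpleGraph V) (hfin : ∀ v : V, (G.neighborSet v).Finite)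
    (a : V → V → ℝ) (b : V → ℝ) (f : V → ℂ) : V → ℂ :=
  fun v => (∑ w ∈ (hfin v).toFinset, (a v w : ℂ) * f w) + (b v : ℂ) * f v

namespace StarAux

variable {V : Type*} {G : SimpleGraph V}

lemma mem_nbr {hfin : ∀ v : V, (G.neighborSet v).Finite} {v w : V} :
    w ∈ (hfin v).toFinset ↔ G.Adj v w := by
  simp [Set.Finite.mem_toFinset]

lemma phi0_mem (S : StarLike G 1) : S.φ 0 0 ∈ S.K := (S.branch_inter_K 0 0).mpr rfl

lemma phi_not_mem (S : StarLike G 1) {n : ℕ} (hn : n ≠ 0) : S.φ 0 n ∉ S.K :=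
  fun h => hn ((S.branch_inter_K 0 n).mp h)

lemma adj_chain (S : StarLike G 1) (j : ℕ) : G.Adj (S.φ 0 j) (S.φ 0 (j + 1)) := by
  cases j with
  | zero => exact ((S.adj_branch 0 1 le_rfl (S.φ 0 0)).mpr (Or.inl rfl)).symm
  | succ j => exact (S.adj_branch 0 (j + 1) (Nat.le_add_left 1 j) _).mpr (Or.inr rfl)

/-- Neighbors of a `K`-vertex other than `φ 0 0` stay in `K`. -/
lemma nbr_K (S : StarLike G 1) {v w : V} (hv : v ∈ S.K) (hv0 : v ≠ S.φ 0 0)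
    (h : G.Adj v w) : w ∈ S.K := by
  rcases S.cover w with hw | ⟨i, n, rfl⟩
  · exact hw
  · have hi : i = 0 := Subsingleton.elim _ _
    subst hi
    cases n with
    | zero => exact phi0_mem S
    | succ n =>
      rcases (S.adj_branch 0 (n + 1) (Nat.le_add_left 1 n) v).mp h.symm with h1 | h1
      · have hn : n + 1 - 1 = 0 := (S.branch_inter_K 0 _).mp (h1 ▸ hv)
        have : n = 0 := by omega
        subst this
        exact absurd h1 hv0
      · have : n + 1 + 1 = 0 := (S.branch_inter_K 0 _).mp (h1 ▸ hv)
        omega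

lemma nbrFinset_branch [DecidableEq V] (S : StarLike G 1) {m : ℕ} (hm : 1 ≤ m) :
    (S.locFin (S.φ 0 m)).toFinset = {S.φ 0 (m - 1), S.φ 0 (m + 1)} := by
  ext w
  simp [Set.Finite.mem_toFinset, S.adj_branch 0 m hm w]

lemma Jpt_branch (S : StarLike G 1) (a : V → V → ℝ) (b : V → ℝ) {m : ℕ} (hm : 1 ≤ m)
    (f : V → ℂ) :
    Jpt G S.locFin a b f (S.φ 0 m)
      = (a (S.φ 0 m) (S.φ 0 (m - 1)) : ℂ) * f (S.φ 0 (m - 1))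
        + (a (S.φ 0 m) (S.φ 0 (m + 1)) : ℂ) * f (S.φ 0 (m + 1))
        + (b (S.φ 0 m) : ℂ) * f (S.φ 0 m) := by
  classical
  unfold Jpt
  rw [nbrFinset_branch S hm, Finset.sum_pair (fun h => by have := S.φ_inj 0 h; omega)]

end StarAux


namespace StarAux2
open StarAux

variable {V : Type*} {G : SimpleGraph V}

/-- one step of support propagation -/
lemma vanish_step (S : StarLike G 1) (a : V → V → ℝ) (b : V → ℝ) {f : V → ℂ} {n : ℕ}
    (hK : ∀ v ∈ S.K, f v = 0) (hL : ∀ m, m ≤ n + 1 → f (S.φ 0 m) = 0) :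
    (∀ v ∈ S.K, Jpt G S.locFin a b f v = 0) ∧
      (∀ m, m ≤ n → Jpt G S.locFin a b f (S.φ 0 m) = 0) := by
  have hKstep : ∀ v ∈ S.K, Jpt G S.locFin a b f v = 0 := by
    intro v hv
    unfold Jpt
    rw [hK v hv, mul_zero, add_zero]
    apply Finset.sum_eq_zero
    intro w hw
    have hadj : G.Adj v w := mem_nbr.mp hw
    by_cases hv0 : v = S.φ 0 0
    · subst hv0
      rcases S.adj_base 0 w hadj with hwK | hw1
      · rw [hK w hwK, mul_zero]
      · rw [hw1, hL 1 (by omega), mul_zero]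
    · rw [hK w (nbr_K S hv hv0 hadj), mul_zero]
  refine ⟨hKstep, fun m hm => ?_⟩
  cases m with
  | zero => exact hKstep _ (phi0_mem S)
  | succ m =>
    rw [Jpt_branch S a b (Nat.le_add_left 1 m) f,
      hL _ (by omega : m + 1 - 1 ≤ n + 1), hL _ (by omega : m + 1 + 1 ≤ n + 1),
      hL _ (by omega : m + 1 ≤ n + 1)]
    ring

lemma vanish_iter (S : StarLike G 1) (a : V → V → ℝ) (b : V → ℝ) {ψ : V → ℂ} {n : ℕ}
    (hK : ∀ v ∈ S.K, ψ v = 0) (hL : ∀ m, m ≤ n → ψ (S.φ 0 m) = 0) :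
    ∀ k, k ≤ n →
      (∀ v ∈ S.K, (Jpt G S.locFin a b)^[k] ψ v = 0) ∧
        (∀ m, m + k ≤ n → (Jpt G S.locFin a b)^[k] ψ (S.φ 0 m) = 0) := by
  intro k
  induction k with
  | zero => intro _; exact ⟨hK, fun m hm => hL m (by omega)⟩
  | succ k ih =>
    intro hk
    obtain ⟨ihK, ihL⟩ := ih (by omega)
    have := vanish_step S a b (f := (Jpt G S.locFin a b)^[k] ψ) (n := n - k - 1) ihK
      (fun m hm => ihL m (by omega))
    rw [Function.iterate_succ_apply']
    exact ⟨this.1, fun m hm => this.2 m (by omega)⟩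

lemma branch_prod (S : StarLike G 1) (a : V → V → ℝ) (b : V → ℝ)
    (hpos : ∀ u v, G.Adj u v → 0 < a u v) {ψ : V → ℂ} {n : ℕ}
    (hK : ∀ v ∈ S.K, ψ v = 0) (hL : ∀ m, m ≤ n → ψ (S.φ 0 m) = 0) :
    ∀ k, k ≤ n → ∃ A : ℝ, 0 < A ∧
      (Jpt G S.locFin a b)^[k] ψ (S.φ 0 (n + 1 - k)) = (A : ℂ) * ψ (S.φ 0 (n + 1)) := by
  intro k
  induction k with
  | zero => intro _; exact ⟨1, one_pos, by simp⟩
  | succ k ih =>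
    intro hk
    obtain ⟨A, hA, hAeq⟩ := ih (by omega)
    obtain ⟨hvK, hvL⟩ := vanish_iter S a b hK hL k (by omega)
    have hm1 : 1 ≤ n - k := by omega
    have heq : n + 1 - (k + 1) = n - k := by omega
    rw [heq, Function.iterate_succ_apply', Jpt_branch S a b hm1]
    have h1 : (Jpt G S.locFin a b)^[k] ψ (S.φ 0 (n - k - 1)) = 0 :=
      hvL _ (by omega)
    have h2 : (Jpt G S.locFin a b)^[k] ψ (S.φ 0 (n - k)) = 0 :=
      hvL _ (by omega)
    have h3 : n - k + 1 = n + 1 - k := by omega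
    rw [h1, h2, h3, hAeq]
    refine ⟨a (S.φ 0 (n - k)) (S.φ 0 (n + 1 - k)) * A, ?_, ?_⟩
    · exact mul_pos (hpos _ _ (h3 ▸ adj_chain S (n - k))) hA
    · push_cast
      ring

end StarAux2


namespace StarAux3
open StarAux StarAux2

variable {V : Type*} {G : SimpleGraph V}

lemma Jpt_apply (hfin : ∀ v : V, (G.neighborSet v).Finite) (a : V → V → ℝ) (b : V → ℝ)
    (f : V → ℂ) (v : V) :
    Jpt G hfin a b f v
      = (∑ w ∈ (hfin v).toFinset, (a v w : ℂ) * f w) + (b v : ℂ) * f v := rfl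

open Classical in
/-- geodesic coefficients -/
noncomputable def coef (G : SimpleGraph V) (hfin : ∀ v : V, (G.neighborSet v).Finite)
    (a : V → V → ℝ) (t : V) : ℕ → V → ℝ
  | 0 => fun v => if v = t then 1 else 0
  | (k + 1) => fun v => ∑ w ∈ (hfin v).toFinset, a v w * coef G hfin a t k w

lemma coef_nonneg (hfin : ∀ v : V, (G.neighborSet v).Finite) (a : V → V → ℝ)
    (hpos : ∀ u v, G.Adj u v → 0 < a u v) (t : V) :
    ∀ k v, 0 ≤ coef G hfin a t k v := by
  intro k
  induction k with
  | zero => intro v; simp only [coef]; split <;> norm_num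
  | succ k ih =>
    intro v
    simp only [coef]
    apply Finset.sum_nonneg
    intro w hw
    exact mul_nonneg (hpos _ _ (mem_nbr.mp hw)).le (ih w)

lemma coef_eq_zero (hfin : ∀ v : V, (G.neighborSet v).Finite) (a : V → V → ℝ)
    (hconn : G.Connected) (t : V) :
    ∀ k v, k < G.dist v t → coef G hfin a t k v = 0 := by
  intro k
  induction k with
  | zero =>
    intro v hv
    have : v ≠ t := fun h => by simp [h, SimpleGraph.dist_self] at hv
    simp only [coef, if_neg this]
  | succ k ih =>
    intro v hv
    simp only [coef]
    apply Finset.sum_eq_zero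
    intro w hw
    have hadj : G.Adj v w := mem_nbr.mp hw
    have hd1 : G.dist v w ≤ 1 := SimpleGraph.dist_le (SimpleGraph.Walk.cons hadj SimpleGraph.Walk.nil)
    have htri : G.dist v t ≤ G.dist v w + G.dist w t := hconn.dist_triangle
    have : k < G.dist w t := by omega
    rw [ih w this, mul_zero]

lemma coef_pos (hfin : ∀ v : V, (G.neighborSet v).Finite) (a : V → V → ℝ)
    (hpos : ∀ u v, G.Adj u v → 0 < a u v) (hconn : G.Connected) (t : V) :
    ∀ k v, G.dist v t = k → 0 < coef G hfin a t k v := by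
  intro k
  induction k with
  | zero =>
    intro v hv
    have : v = t := (hconn.dist_eq_zero_iff).mp hv
    simp [coef, this]
  | succ k ih =>
    intro v hv
    obtain ⟨p, hp⟩ := (hconn v t).exists_walk_length_eq_dist
    rw [hv] at hp
    cases p with
    | nil => simp at hp
    | @cons _ w _ hadj q =>
      simp only [SimpleGraph.Walk.length_cons, Nat.add_right_cancel_iff] at hp
      have hwd : G.dist w t = k := by
        have h1 : G.dist w t ≤ k := hp ▸ SimpleGraph.dist_le q
        have hd1 : G.dist v w ≤ 1 :=
          SimpleGraph.dist_le (SimpleGraph.Walk.cons hadj SimpleGraph.Walk.nil)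
        have htri : G.dist v t ≤ G.dist v w + G.dist w t := hconn.dist_triangle
        omega
      simp only [coef]
      apply Finset.sum_pos'
      · intro x hx
        exact mul_nonneg (hpos _ _ (mem_nbr.mp hx)).le (coef_nonneg hfin a hpos t k x)
      · exact ⟨w, mem_nbr.mpr hadj, mul_pos (hpos _ _ hadj) (ih w hwd)⟩

/-- Main propagation identity: up to the distance to `t = φ 0 1`, the iterates of `J`
applied to a `K`-vanishing `ψ` are a nonnegative multiple of `ψ t`. -/
lemma iter_eq_coef (S : StarLike G 1) (a : V → V → ℝ) (b : V → ℝ) {ψ : V → ℂ}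
    (hK : ∀ v ∈ S.K, ψ v = 0) :
    ∀ k v, (v ∈ S.K ∨ v = S.φ 0 1) → k ≤ G.dist v (S.φ 0 1) →
      (Jpt G S.locFin a b)^[k] ψ v
        = (coef G S.locFin a (S.φ 0 1) k v : ℂ) * ψ (S.φ 0 1) := by
  set t := S.φ 0 1 with ht
  intro k
  induction k with
  | zero =>
    intro v hv _
    rcases hv with hv | rfl
    · have hne : v ≠ t := fun h => phi_not_mem S (by omega) (h ▸ hv)
      simp [coef, hne, hK v hv]
    · simp [coef]
  | succ k ih =>
    intro v hv hk
    have hvt : v ≠ t := by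
      intro h
      rw [h, SimpleGraph.dist_self] at hk
      omega
    have hvK : v ∈ S.K := by
      rcases hv with hv | hv
      · exact hv
      · exact absurd hv hvt
    rw [Function.iterate_succ_apply', Jpt_apply]
    have hself : (Jpt G S.locFin a b)^[k] ψ v = 0 := by
      rw [ih v (Or.inl hvK) (by omega),
        coef_eq_zero S.locFin a S.connected t k v (by omega), Complex.ofReal_zero, zero_mul]
    rw [hself, mul_zero, add_zero]
    have hterm : ∀ w ∈ (S.locFin v).toFinset,
        (a v w : ℂ) * (Jpt G S.locFin a b)^[k] ψ w
          = ((a v w * coef G S.locFin a t k w : ℝ) : ℂ) * ψ t := by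
      intro w hw
      have hadj : G.Adj v w := mem_nbr.mp hw
      have hwKt : w ∈ S.K ∨ w = t := by
        by_cases hv0 : v = S.φ 0 0
        · exact S.adj_base 0 w (hv0 ▸ hadj)
        · exact Or.inl (nbr_K S hvK hv0 hadj)
      have hd1 : G.dist v w ≤ 1 :=
        SimpleGraph.dist_le (SimpleGraph.Walk.cons hadj SimpleGraph.Walk.nil)
      have htri : G.dist v t ≤ G.dist v w + G.dist w t := S.connected.dist_triangle
      have hkw : k ≤ G.dist w t := by omega
      rw [ih w hwKt hkw]
      push_cast
      ring
    rw [Finset.sum_congr rfl hterm, ← Finset.sum_mul, ← Complex.ofReal_sum]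
    rfl

/-- Base lemma: vanishing moments at `v₀` force `ψ (φ 0 1) = 0`. -/
lemma base (S : StarLike G 1) (a : V → V → ℝ) (b : V → ℝ)
    (hpos : ∀ u v, G.Adj u v → 0 < a u v) (v₀ : V) (hv₀ : v₀ ∈ S.K) {ψ : V → ℂ}
    (hK : ∀ v ∈ S.K, ψ v = 0)
    (hmom : ∀ k : ℕ, (Jpt G S.locFin a b)^[k] ψ v₀ = 0) :
    ψ (S.φ 0 1) = 0 := by
  set t := S.φ 0 1 with ht
  set k₀ := G.dist v₀ t with hk₀
  have h1 := iter_eq_coef S a b hK k₀ v₀ (Or.inl hv₀) le_rfl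
  rw [hmom k₀] at h1
  have h2 : 0 < coef G S.locFin a t k₀ v₀ :=
    coef_pos S.locFin a hpos S.connected t k₀ v₀ rfl
  have h3 : (coef G S.locFin a t k₀ v₀ : ℂ) ≠ 0 := by
    exact_mod_cast h2.ne'
  exact (mul_eq_zero.mp h1.symm).resolve_left h3

end StarAux3


namespace StarAux4
open StarAux StarAux2 StarAux3

variable {V : Type*} {G : SimpleGraph V}

lemma Jpt_sub (hfin : ∀ v : V, (G.neighborSet v).Finite) (a : V → V → ℝ) (b : V → ℝ)
    (f g : V → ℂ) :
    Jpt G hfin a b (f - g) = Jpt G hfin a b f - Jpt G hfin a b g := by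
  funext v
  simp only [Jpt, Pi.sub_apply, mul_sub, Finset.sum_sub_distrib]
  ring

lemma Jpt_iter_sub (hfin : ∀ v : V, (G.neighborSet v).Finite) (a : V → V → ℝ) (b : V → ℝ)
    (f g : V → ℂ) : ∀ k : ℕ,
    (Jpt G hfin a b)^[k] (f - g) = (Jpt G hfin a b)^[k] f - (Jpt G hfin a b)^[k] g := by
  intro k
  induction k with
  | zero => rfl
  | succ k ih =>
    rw [Function.iterate_succ_apply', Function.iterate_succ_apply',
      Function.iterate_succ_apply', ih, Jpt_sub]

end StarAux4

open StarAux StarAux2 StarAux3 StarAux4 in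
/-- Let `G` be a star-like graph with one branch, `a` a symmetric edge
weight, positive on adjacent pairs, `b : V → ℝ`, `J` the associated pointwise operator and
`v₀ ∈ K`. If `ψ : V → ℂ` vanishes on `K` and `(Jᵏψ)(v₀) = 0` for every `k ≥ 0`, then
`ψ ≡ 0`. Equivalently, any `ψ` with `(Jᵏψ)(v₀) = 0` for all `k ≥ 0` is uniquely determined
on the branch `L₁` by its values on `K`. -/
theorem stmt_5 {V : Type*} (G : SimpleGraph V) (S : StarLike G 1)
    (a : V → V → ℝ) (b : V → ℝ) (hsymm : ∀ u v, a u v = a v u)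
    (hpos : ∀ u v, G.Adj u v → 0 < a u v)
    (v₀ : V) (hv₀ : v₀ ∈ S.K) :
    (∀ ψ : V → ℂ, (∀ v ∈ S.K, ψ v = 0) →
      (∀ k : ℕ, (Jpt G S.locFin a b)^[k] ψ v₀ = 0) → ψ = 0) ∧
    (∀ ψ₁ ψ₂ : V → ℂ, (∀ k : ℕ, (Jpt G S.locFin a b)^[k] ψ₁ v₀ = 0) →
      (∀ k : ℕ, (Jpt G S.locFin a b)^[k] ψ₂ v₀ = 0) →
      (∀ v ∈ S.K, ψ₁ v = ψ₂ v) → ∀ n : ℕ, ψ₁ (S.φ 0 n) = ψ₂ (S.φ 0 n)) := by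
  have part1 : ∀ ψ : V → ℂ, (∀ v ∈ S.K, ψ v = 0) →
      (∀ k : ℕ, (Jpt G S.locFin a b)^[k] ψ v₀ = 0) → ψ = 0 := by
    intro ψ hK hmom
    have hx : ∀ n : ℕ, ψ (S.φ 0 n) = 0 := by
      intro n
      induction n using Nat.strong_induction_on with
      | _ n ih =>
        match n with
        | 0 => exact hK _ (phi0_mem S)
        | (n + 1) =>
          have hL : ∀ m, m ≤ n → ψ (S.φ 0 m) = 0 := fun m hm => ih m (by omega)
          obtain ⟨A, hA, hAeq⟩ := branch_prod S a b hpos hK hL n le_rfl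
          have hgK : ∀ v ∈ S.K, (Jpt G S.locFin a b)^[n] ψ v = 0 :=
            (vanish_iter S a b hK hL n le_rfl).1
          have hgmom : ∀ k : ℕ, (Jpt G S.locFin a b)^[k] ((Jpt G S.locFin a b)^[n] ψ) v₀ = 0 := by
            intro k
            rw [← Function.iterate_add_apply]
            exact hmom (k + n)
          have hbase := base S a b hpos v₀ hv₀ hgK hgmom
          rw [show n + 1 - n = 1 by omega] at hAeq
          rw [hbase] at hAeq
          have hA0 : (A : ℂ) ≠ 0 := by exact_mod_cast hA.ne'
          field_simp at hAeq
          exact (mul_eq_zero.mp hAeq.symm).resolve_left hA0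
    funext v
    rcases S.cover v with hv | ⟨i, m, rfl⟩
    · simpa using hK v hv
    · have : i = 0 := Subsingleton.elim _ _
      subst this
      simpa using hx m
  refine ⟨part1, ?_⟩
  intro ψ₁ ψ₂ h1 h2 hKeq n
  have hK : ∀ v ∈ S.K, (ψ₁ - ψ₂) v = 0 := by
    intro v hv
    simp [hKeq v hv]
  have hmom : ∀ k : ℕ, (Jpt G S.locFin a b)^[k] (ψ₁ - ψ₂) v₀ = 0 := by
    intro k
    rw [Jpt_iter_sub, Pi.sub_apply, h1 k, h2 k, sub_zero]
  have := part1 (ψ₁ - ψ₂) hK hmom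
  have h := congrFun this (S.φ 0 n)
  simp only [Pi.sub_apply, Pi.zero_apply, sub_eq_zero] at h
  exact h
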